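/- Let b > 0 be a real constant and define φ(α) = (cos α + sin α − 1)/(cos α + b). Then φ is strictly concave on the closed interval [0, π/2]. -/

import Mathlib

open Real

lemma hasDerivAt_phi (b : ℝ) (x : ℝ) (hx : Real.cos x + b ≠ 0) :
    HasDerivAt (fun α => (Real.cos α + Real.sin α - 1) / (Real.cos α + b))
      ((1 + b * Real.cos x - (b + 1) * Real.sin x) / (Real.cos x + b) ^ 2) x := by
  have h1 : HasDerivAt (fun α => Real.cos α + Real.sin α - 1)
      (-Real.sin x + Real.cos x) x := by
    simpa using ((Real.hasDerivAt_cos x).add (Real.hasDerivAt_sin x)).sub_const 1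
  have h2 : HasDerivAt (fun α => Real.cos α + b) (-Real.sin x) x := by
    simpa using (Real.hasDerivAt_cos x).add_const b
  have := h1.div h2 hx
  refine this.congr_deriv ?_
  have hpy := Real.sin_sq_add_cos_sq x
  field_simp
  nlinarith [hpy]

lemma hasDerivAt_phi' (b : ℝ) (x : ℝ) (hx : Real.cos x + b ≠ 0) :
    HasDerivAt (fun α => (1 + b * Real.cos α - (b + 1) * Real.sin α) / (Real.cos α + b) ^ 2)
      (((-b * Real.sin x - (b + 1) * Real.cos x) * (Real.cos x + b) ^ 2 -
        (1 + b * Real.cos x - (b + 1) * Real.sin x) * (2 * (Real.cos x + b) * (-Real.sin x))) /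
        ((Real.cos x + b) ^ 2) ^ 2) x := by
  have h1 : HasDerivAt (fun α => 1 + b * Real.cos α - (b + 1) * Real.sin α)
      (-b * Real.sin x - (b + 1) * Real.cos x) x := by
    have := (((Real.hasDerivAt_cos x).const_mul b).const_add 1).sub
      ((Real.hasDerivAt_sin x).const_mul (b + 1))
    refine this.congr_deriv ?_
    ring
  have h2 : HasDerivAt (fun α => (Real.cos α + b) ^ 2)
      (2 * (Real.cos x + b) * (-Real.sin x)) x := by
    have := ((Real.hasDerivAt_cos x).add_const b).pow 2
    refine this.congr_deriv ?_
    ring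
  exact h1.div h2 (pow_ne_zero 2 hx)

/-- Lemma 5: φ(α) = (cos α + sin α − 1)/(cos α + b) is strictly concave on [0, π/2]. -/
theorem phi_strictConcave (b : ℝ) (hb : 0 < b) :
    StrictConcaveOn ℝ (Set.Icc 0 (π / 2))
      (fun α => (Real.cos α + Real.sin α - 1) / (Real.cos α + b)) := by
  apply strictConcaveOn_of_deriv2_neg (convex_Icc _ _)
  · apply ContinuousOn.div (by fun_prop) (by fun_prop)
    intro x hx
    simp only [Set.mem_Icc] at hx
    have : 0 ≤ Real.cos x := Real.cos_nonneg_of_mem_Icc (by constructor <;> linarith [hx.1, hx.2, pi_pos])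
    positivity
  · intro x hx
    rw [interior_Icc, Set.mem_Ioo] at hx
    have hc : 0 < Real.cos x := Real.cos_pos_of_mem_Ioo ⟨by linarith [hx.1, pi_pos], hx.2⟩
    have hs : 0 < Real.sin x := Real.sin_pos_of_pos_of_lt_pi hx.1 (by linarith [hx.2, pi_pos])
    have hs1 : Real.sin x ≤ 1 := Real.sin_le_one x
    have hcb : (0:ℝ) < Real.cos x + b := by linarith
    -- deriv f = g near x
    have hopen : IsOpen {y : ℝ | 0 < Real.cos y + b} :=
      isOpen_lt continuous_const (by continuity)
    have hmem : x ∈ {y : ℝ | 0 < Real.cos y + b} := hcb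
    have hev : (fun y => deriv (fun α => (Real.cos α + Real.sin α - 1) / (Real.cos α + b)) y)
        =ᶠ[nhds x] (fun y => (1 + b * Real.cos y - (b + 1) * Real.sin y) / (Real.cos y + b) ^ 2) := by
      filter_upwards [hopen.mem_nhds hmem] with y hy
      exact (hasDerivAt_phi b y (ne_of_gt hy)).deriv
    have h2 : deriv^[2] (fun α => (Real.cos α + Real.sin α - 1) / (Real.cos α + b)) x =
        ((-b * Real.sin x - (b + 1) * Real.cos x) * (Real.cos x + b) ^ 2 -
          (1 + b * Real.cos x - (b + 1) * Real.sin x) * (2 * (Real.cos x + b) * (-Real.sin x))) /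
          ((Real.cos x + b) ^ 2) ^ 2 := by
      show deriv (deriv _) x = _
      rw [Filter.EventuallyEq.deriv_eq hev]
      exact (hasDerivAt_phi' b x (ne_of_gt hcb)).deriv
    rw [h2]
    apply div_neg_of_neg_of_pos _ (by positivity)
    have hpy := Real.sin_sq_add_cos_sq x
    set s := Real.sin x
    set c := Real.cos x
    have hE : b * s * c - b ^ 2 * s - (b + 1) * c ^ 2 - b * (b + 1) * c + 2 * s
        - 2 * (b + 1) * s ^ 2 < 0 := by
      nlinarith [mul_nonneg (mul_nonneg hb.le hc.le) (by linarith : (0:ℝ) ≤ 1 + b - s),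
        mul_pos (mul_pos hb hb) hs,
        mul_nonneg (by linarith : (0:ℝ) ≤ b + 1) (sq_nonneg (s - 1)),
        mul_pos hb hs]
    have hfac : (-b * s - (b + 1) * c) * (c + b) ^ 2 -
        (1 + b * c - (b + 1) * s) * (2 * (c + b) * -s) =
        (c + b) * (b * s * c - b ^ 2 * s - (b + 1) * c ^ 2 - b * (b + 1) * c + 2 * s
          - 2 * (b + 1) * s ^ 2) := by ring
    rw [hfac]
    exact mul_neg_of_pos_of_neg hcb hE
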